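/- arXiv:1410.6539 — 5 statements merged into one kernel-verified Lean document; each statement's English description precedes it below -/
import Mathlib

section
/- Let r ∈ ℝ and σ ∈ [1, ∞), and define N(v) = 2σ·‖v‖_{r,σ} for v ∈ ℂ². Then N is a submultiplicative norm on ℂ², i.e. N(v * w) ≤ N(v)·N(w) for all v, w ∈ ℂ², and ‖v‖_max ≤ (1/σ)·N(v) for all v ∈ ℂ². -/
set_option maxHeartbeats 1000000


noncomputable section

/-- The `C*`-norm `‖(x,y)‖_max = max{|x|, |y|}` on `ℂ²`. -/
noncomputable def normMax (v : ℂ × ℂ) : ℝ := max (‖v.1‖) (‖v.2‖)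

/-- The norm `‖(x,y)‖_{r,σ} = max{|x + r·y|, σ·|y − r·x|}` on `ℂ²`. -/
noncomputable def normRS (r σ : ℝ) (v : ℂ × ℂ) : ℝ :=
  max (‖v.1 + (r : ℂ) * v.2‖) (σ * ‖v.2 - (r : ℂ) * v.1‖)

/-- Coordinatewise multiplication on `ℂ²`. -/
def cmul (v w : ℂ × ℂ) : ℂ × ℂ := (v.1 * w.1, v.2 * w.2)

lemma auxQ1 (r : ℝ) :
    |1 + r ^ 3| + 2 * |r ^ 2 - r| + |r ^ 2 + r| ≤ 2 * (1 + r ^ 2) ^ 2 := by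
  rcases abs_cases (1 + r ^ 3) with ⟨h1, _⟩ | ⟨h1, _⟩ <;>
  rcases abs_cases (r ^ 2 - r) with ⟨h2, _⟩ | ⟨h2, _⟩ <;>
  rcases abs_cases (r ^ 2 + r) with ⟨h3, _⟩ | ⟨h3, _⟩ <;>
  rw [h1, h2, h3] <;>
  nlinarith [sq_nonneg r, sq_nonneg (r-1), sq_nonneg (r+1), sq_nonneg (r^2-1), sq_nonneg (r^2-r), sq_nonneg (r^2+r), sq_nonneg (2*r-1), sq_nonneg (2*r+1), sq_nonneg (r^2-r+1), sq_nonneg (r^2+r-1)]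

lemma absTriple (c1 c2 c3 : ℝ) (z1 z2 z3 : ℂ) :
    ‖(c1:ℂ) * z1 + (c2:ℂ) * z2 + (c3:ℂ) * z3‖ ≤
      |c1| * ‖z1‖ + |c2| * ‖z2‖ + |c3| * ‖z3‖ := by
  refine le_trans (norm_add_le _ _) ?_
  refine add_le_add (le_trans (norm_add_le _ _) ?_) ?_ <;>
    simp [norm_mul, Complex.norm_real]

lemma prodBound (r σ : ℝ) (hσ : 1 ≤ σ) (v w : ℂ × ℂ) :
    normRS r σ (cmul v w) ≤ 2 * σ * (normRS r σ v * normRS r σ w) := by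
  have hσ0 : (0:ℝ) < σ := lt_of_lt_of_le one_pos hσ
  set a1 := v.1 + (r:ℂ) * v.2 with ha1d
  set b1 := v.2 - (r:ℂ) * v.1 with hb1d
  set a2 := w.1 + (r:ℂ) * w.2 with ha2d
  set b2 := w.2 - (r:ℂ) * w.1 with hb2d
  set M1 := normRS r σ v with hM1d
  set M2 := normRS r σ w with hM2d
  have hA1 : ‖a1‖ ≤ M1 := le_max_left _ _
  have hA2 : ‖a2‖ ≤ M2 := le_max_left _ _
  have hB1σ : σ * ‖b1‖ ≤ M1 := le_max_right _ _
  have hB2σ : σ * ‖b2‖ ≤ M2 := le_max_right _ _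
  have hB1 : ‖b1‖ ≤ M1 :=
    le_trans (le_mul_of_one_le_left (norm_nonneg _) hσ) hB1σ
  have hB2 : ‖b2‖ ≤ M2 :=
    le_trans (le_mul_of_one_le_left (norm_nonneg _) hσ) hB2σ
  have hM1 : 0 ≤ M1 := le_trans (norm_nonneg _) hA1
  have hM2 : 0 ≤ M2 := le_trans (norm_nonneg _) hA2
  have hM12 : 0 ≤ M1 * M2 := mul_nonneg hM1 hM2
  have hpos : (0:ℝ) < (1 + r ^ 2) ^ 2 := by positivity
  have ida : (((1 + r ^ 2) ^ 2 : ℝ) : ℂ) * (v.1 * w.1 + (r:ℂ) * (v.2 * w.2)) =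
      ((1 + r ^ 3 : ℝ) : ℂ) * (a1 * a2) + ((r ^ 2 - r : ℝ) : ℂ) * (a1 * b2 + a2 * b1) +
        ((r ^ 2 + r : ℝ) : ℂ) * (b1 * b2) := by
    simp only [ha1d, hb1d, ha2d, hb2d]; push_cast; ring
  have idb : (((1 + r ^ 2) ^ 2 : ℝ) : ℂ) * (v.2 * w.2 - (r:ℂ) * (v.1 * w.1)) =
      ((1 - r ^ 3 : ℝ) : ℂ) * (b1 * b2) + ((r ^ 2 + r : ℝ) : ℂ) * (a1 * b2 + a2 * b1) +
        ((r ^ 2 - r : ℝ) : ℂ) * (a1 * a2) := by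
    simp only [ha1d, hb1d, ha2d, hb2d]; push_cast; ring
  have habs : ∀ z : ℂ, ‖(((1 + r ^ 2) ^ 2 : ℝ) : ℂ) * z‖ =
      (1 + r ^ 2) ^ 2 * ‖z‖ := by
    intro z
    rw [norm_mul, Complex.norm_real, Real.norm_eq_abs, abs_of_nonneg hpos.le]
  have hq := auxQ1 r
  have hq' := auxQ1 (-r)
  rw [show (1 + (-r) ^ 3) = 1 - r ^ 3 by ring, show ((-r) ^ 2 - -r) = r ^ 2 + r by ring,
      show ((-r) ^ 2 + -r) = r ^ 2 - r by ring, show (1 + (-r) ^ 2) ^ 2 = (1 + r ^ 2) ^ 2 by ring]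
      at hq'
  have emix : ‖a1 * b2 + a2 * b1‖ ≤ 2 * (M1 * M2) := by
    refine le_trans (norm_add_le _ _) ?_
    rw [norm_mul, norm_mul]
    nlinarith [mul_le_mul hA1 hB2 (norm_nonneg _) hM1,
      mul_le_mul hA2 hB1 (norm_nonneg _) hM2]
  have emixσ : σ * ‖a1 * b2 + a2 * b1‖ ≤ 2 * (M1 * M2) := by
    have h := norm_add_le (a1 * b2) (a2 * b1)
    rw [norm_mul, norm_mul] at h
    nlinarith [mul_le_mul hA1 hB2σ (mul_nonneg hσ0.le (norm_nonneg _)) hM1,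
      mul_le_mul hA2 hB1σ (mul_nonneg hσ0.le (norm_nonneg _)) hM2]
  have eaa : ‖a1 * a2‖ ≤ M1 * M2 := by
    rw [norm_mul]; exact mul_le_mul hA1 hA2 (norm_nonneg _) hM1
  have ebb : ‖b1 * b2‖ ≤ M1 * M2 := by
    rw [norm_mul]; exact mul_le_mul hB1 hB2 (norm_nonneg _) hM1
  have ebbσ : σ * ‖b1 * b2‖ ≤ M1 * M2 := by
    rw [norm_mul, ← mul_assoc]
    exact mul_le_mul hB1σ hB2 (norm_nonneg _) hM1
  have bd1 : ‖v.1 * w.1 + (r:ℂ) * (v.2 * w.2)‖ ≤ 2 * σ * (M1 * M2) := by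
    have h1 := absTriple (1 + r ^ 3) (r ^ 2 - r) (r ^ 2 + r) (a1 * a2) (a1 * b2 + a2 * b1)
      (b1 * b2)
    rw [← ida, habs] at h1
    have final : (1 + r ^ 2) ^ 2 * ‖v.1 * w.1 + (r:ℂ) * (v.2 * w.2)‖ ≤
        (1 + r ^ 2) ^ 2 * (2 * σ * (M1 * M2)) := by
      linarith [h1,
        mul_le_mul_of_nonneg_left eaa (abs_nonneg (1 + r ^ 3)),
        mul_le_mul_of_nonneg_left emix (abs_nonneg (r ^ 2 - r)),
        mul_le_mul_of_nonneg_left ebb (abs_nonneg (r ^ 2 + r)),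
        mul_le_mul_of_nonneg_right hq hM12,
        mul_nonneg (mul_nonneg (sub_nonneg.2 hσ) hpos.le) hM12]
    exact le_of_mul_le_mul_left final hpos
  have bd2 : σ * ‖v.2 * w.2 - (r:ℂ) * (v.1 * w.1)‖ ≤ 2 * σ * (M1 * M2) := by
    have h1 := absTriple (1 - r ^ 3) (r ^ 2 + r) (r ^ 2 - r) (b1 * b2) (a1 * b2 + a2 * b1)
      (a1 * a2)
    rw [← idb, habs] at h1
    have final : (1 + r ^ 2) ^ 2 * (σ * ‖v.2 * w.2 - (r:ℂ) * (v.1 * w.1)‖) ≤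
        (1 + r ^ 2) ^ 2 * (2 * σ * (M1 * M2)) := by
      linarith [mul_le_mul_of_nonneg_left h1 hσ0.le,
        mul_le_mul_of_nonneg_left ebbσ (abs_nonneg (1 - r ^ 3)),
        mul_le_mul_of_nonneg_left emixσ (abs_nonneg (r ^ 2 + r)),
        mul_le_mul_of_nonneg_left eaa (mul_nonneg hσ0.le (abs_nonneg (r ^ 2 - r))),
        mul_le_mul_of_nonneg_right hq' (mul_nonneg hσ0.le hM12),
        mul_nonneg (sub_nonneg.2 hσ) (mul_nonneg (abs_nonneg (1 - r ^ 3)) hM12),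
        mul_nonneg (sub_nonneg.2 hσ) (mul_nonneg (abs_nonneg (r ^ 2 + r)) hM12)]
    exact le_of_mul_le_mul_left final hpos
  show max _ _ ≤ _
  exact max_le bd1 bd2

/-- `N(v) = 2σ·‖v‖_{r,σ}` is a submultiplicative norm on `ℂ²` which dominates
`σ·‖v‖_max`. -/
theorem two_sigma_normRS_submultiplicative_norm (r σ : ℝ) (hσ : 1 ≤ σ) :
    (∀ v : ℂ × ℂ, (2 * σ * normRS r σ v = 0 ↔ v = 0)) ∧
    (∀ v w : ℂ × ℂ, 2 * σ * normRS r σ (v + w) ≤ 2 * σ * normRS r σ v + 2 * σ * normRS r σ w) ∧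
    (∀ (c : ℂ) (v : ℂ × ℂ), 2 * σ * normRS r σ (c • v) = ‖c‖ * (2 * σ * normRS r σ v)) ∧
    (∀ v w : ℂ × ℂ, 2 * σ * normRS r σ (cmul v w) ≤ (2 * σ * normRS r σ v) * (2 * σ * normRS r σ w)) ∧
    (∀ v : ℂ × ℂ, normMax v ≤ 1 / σ * (2 * σ * normRS r σ v)) := by
  have hσ0 : (0:ℝ) < σ := lt_of_lt_of_le one_pos hσ
  have hrc : ((1:ℂ) + (r:ℂ) ^ 2) ≠ 0 := by
    rw [show ((1:ℂ) + (r:ℂ) ^ 2) = ((1 + r ^ 2 : ℝ) : ℂ) by push_cast; ring]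
    exact Complex.ofReal_ne_zero.2 (by positivity)
  refine ⟨?_, ?_, ?_, ?_, ?_⟩
  · -- zero iff
    intro v
    constructor
    · intro h
      have hN : normRS r σ v = 0 := by
        rcases mul_eq_zero.1 h with h' | h'
        · linarith
        · exact h'
      have h1 : ‖v.1 + (r:ℂ) * v.2‖ = 0 := by
        have := le_max_left (‖v.1 + (r:ℂ) * v.2‖)
          (σ * ‖v.2 - (r:ℂ) * v.1‖)
        have h0 := norm_nonneg (v.1 + (r:ℂ) * v.2)
        rw [normRS] at hN
        linarith [this.trans_eq hN]
      have h2 : ‖v.2 - (r:ℂ) * v.1‖ = 0 := by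
        have hle := le_max_right (‖v.1 + (r:ℂ) * v.2‖)
          (σ * ‖v.2 - (r:ℂ) * v.1‖)
        rw [normRS] at hN
        have h0 := norm_nonneg (v.2 - (r:ℂ) * v.1)
        nlinarith [hle.trans_eq hN]
      rw [norm_eq_zero] at h1 h2
      have e1 : ((1:ℂ) + (r:ℂ) ^ 2) * v.1 = (v.1 + (r:ℂ) * v.2) - (r:ℂ) * (v.2 - (r:ℂ) * v.1) := by
        ring
      have e2 : ((1:ℂ) + (r:ℂ) ^ 2) * v.2 = (v.2 - (r:ℂ) * v.1) + (r:ℂ) * (v.1 + (r:ℂ) * v.2) := by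
        ring
      rw [h1, h2] at e1 e2
      simp only [mul_zero, sub_zero, add_zero, zero_sub, neg_zero, zero_add] at e1 e2
      have hv1 : v.1 = 0 := by
        rcases mul_eq_zero.1 e1 with h | h
        · exact absurd h hrc
        · exact h
      have hv2 : v.2 = 0 := by
        rcases mul_eq_zero.1 e2 with h | h
        · exact absurd h hrc
        · exact h
      exact Prod.ext hv1 hv2
    · rintro rfl
      simp [normRS]
  · -- triangle
    intro v w
    have h2σ : (0:ℝ) ≤ 2 * σ := by linarith
    have key : normRS r σ (v + w) ≤ normRS r σ v + normRS r σ w := by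
      simp only [normRS, Prod.fst_add, Prod.snd_add]
      apply max_le
      · have : (v.1 + w.1) + (r:ℂ) * (v.2 + w.2) =
            (v.1 + (r:ℂ) * v.2) + (w.1 + (r:ℂ) * w.2) := by ring
        rw [this]
        exact le_trans (norm_add_le _ _)
          (add_le_add (le_max_left _ _) (le_max_left _ _))
      · have : (v.2 + w.2) - (r:ℂ) * (v.1 + w.1) =
            (v.2 - (r:ℂ) * v.1) + (w.2 - (r:ℂ) * w.1) := by ring
        rw [this]
        calc σ * ‖(v.2 - (r:ℂ) * v.1) + (w.2 - (r:ℂ) * w.1)‖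
            ≤ σ * (‖v.2 - (r:ℂ) * v.1‖ + ‖w.2 - (r:ℂ) * w.1‖) :=
              mul_le_mul_of_nonneg_left (norm_add_le _ _) hσ0.le
          _ = σ * ‖v.2 - (r:ℂ) * v.1‖ + σ * ‖w.2 - (r:ℂ) * w.1‖ := by ring
          _ ≤ _ := add_le_add (le_max_right _ _) (le_max_right _ _)
    nlinarith [mul_le_mul_of_nonneg_left key h2σ]
  · -- scalar multiplication
    intro c v
    have key : normRS r σ (c • v) = ‖c‖ * normRS r σ v := by
      simp only [normRS, Prod.smul_fst, Prod.smul_snd, smul_eq_mul]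
      have e1 : c * v.1 + (r:ℂ) * (c * v.2) = c * (v.1 + (r:ℂ) * v.2) := by ring
      have e2 : c * v.2 - (r:ℂ) * (c * v.1) = c * (v.2 - (r:ℂ) * v.1) := by ring
      rw [e1, e2, norm_mul, norm_mul]
      rw [show σ * (‖c‖ * ‖v.2 - (r:ℂ) * v.1‖) =
        ‖c‖ * (σ * ‖v.2 - (r:ℂ) * v.1‖) by ring]
      exact (mul_max_of_nonneg _ _ (norm_nonneg c)).symm
    rw [key]; ring
  · -- submultiplicativity
    intro v w
    have h := prodBound r σ hσ v w
    have h2σ : (0:ℝ) ≤ 2 * σ := by linarith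
    calc 2 * σ * normRS r σ (cmul v w) ≤ 2 * σ * (2 * σ * (normRS r σ v * normRS r σ w)) :=
          mul_le_mul_of_nonneg_left h h2σ
      _ = (2 * σ * normRS r σ v) * (2 * σ * normRS r σ w) := by ring
  · -- dominance
    intro v
    have heq : 1 / σ * (2 * σ * normRS r σ v) = 2 * normRS r σ v := by
      field_simp
    rw [heq]
    set M := normRS r σ v with hMd
    have hA : ‖v.1 + (r:ℂ) * v.2‖ ≤ M := le_max_left _ _
    have hBσ : σ * ‖v.2 - (r:ℂ) * v.1‖ ≤ M := le_max_right _ _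
    have hB : ‖v.2 - (r:ℂ) * v.1‖ ≤ M :=
      le_trans (le_mul_of_one_le_left (norm_nonneg _) hσ) hBσ
    have hM : 0 ≤ M := le_trans (norm_nonneg _) hA
    have hpos : (0:ℝ) < 1 + r ^ 2 := by positivity
    have habs : ∀ z : ℂ, ‖((1 + r ^ 2 : ℝ) : ℂ) * z‖ =
        (1 + r ^ 2) * ‖z‖ := by
      intro z; rw [norm_mul, Complex.norm_real, Real.norm_eq_abs, abs_of_nonneg hpos.le]
    have hb1 : (1 + r ^ 2) * ‖v.1‖ ≤ 2 * (1 + r ^ 2) * M := by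
      have e1 : ((1 + r ^ 2 : ℝ) : ℂ) * v.1 =
          (v.1 + (r:ℂ) * v.2) + ((-r : ℝ) : ℂ) * (v.2 - (r:ℂ) * v.1) := by push_cast; ring
      have h1 := congrArg norm e1
      rw [habs] at h1
      have h2 : ‖(v.1 + (r:ℂ) * v.2) + ((-r : ℝ) : ℂ) * (v.2 - (r:ℂ) * v.1)‖ ≤
          ‖v.1 + (r:ℂ) * v.2‖ + |(-r : ℝ)| * ‖v.2 - (r:ℂ) * v.1‖ := by
        refine le_trans (norm_add_le _ _) ?_
        rw [norm_mul, Complex.norm_real, Real.norm_eq_abs]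
      rw [← h1] at h2
      have hr2 : |(-r : ℝ)| ≤ 1 + r ^ 2 := by
        rcases abs_cases (-r : ℝ) with ⟨h, _⟩ | ⟨h, _⟩ <;> nlinarith [sq_nonneg (r+1), sq_nonneg (r-1)]
      nlinarith [mul_le_mul hr2 hB (norm_nonneg _) hpos.le, abs_nonneg (-r : ℝ)]
    have hb2 : (1 + r ^ 2) * ‖v.2‖ ≤ 2 * (1 + r ^ 2) * M := by
      have e2 : ((1 + r ^ 2 : ℝ) : ℂ) * v.2 =
          (v.2 - (r:ℂ) * v.1) + ((r : ℝ) : ℂ) * (v.1 + (r:ℂ) * v.2) := by push_cast; ring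
      have h1 := congrArg norm e2
      rw [habs] at h1
      have h2 : ‖(v.2 - (r:ℂ) * v.1) + ((r : ℝ) : ℂ) * (v.1 + (r:ℂ) * v.2)‖ ≤
          ‖v.2 - (r:ℂ) * v.1‖ + |(r : ℝ)| * ‖v.1 + (r:ℂ) * v.2‖ := by
        refine le_trans (norm_add_le _ _) ?_
        rw [norm_mul, Complex.norm_real, Real.norm_eq_abs]
      rw [← h1] at h2
      have hr2 : |(r : ℝ)| ≤ 1 + r ^ 2 := by
        rcases abs_cases (r : ℝ) with ⟨h, _⟩ | ⟨h, _⟩ <;> nlinarith [sq_nonneg (r+1), sq_nonneg (r-1)]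
      nlinarith [mul_le_mul hr2 hA (norm_nonneg _) hpos.le, abs_nonneg (r : ℝ)]
    have h1 : ‖v.1‖ ≤ 2 * M := by
      have := le_of_mul_le_mul_left (by linarith [hb1] : (1 + r ^ 2) * ‖v.1‖ ≤ (1 + r ^ 2) * (2 * M)) hpos
      exact this
    have h2 : ‖v.2‖ ≤ 2 * M := by
      have := le_of_mul_le_mul_left (by linarith [hb2] : (1 + r ^ 2) * ‖v.2‖ ≤ (1 + r ^ 2) * (2 * M)) hpos
      exact this
    exact max_le h1 h2
end
end

section
/- For r ∈ ℝ and σ : ℕ → [1, ∞), the algebra A_{r,σ} is spectral invariant in c₀(ℕ): an element f ∈ A_{r,σ} has a quasi-inverse in A_{r,σ} if and only if it has a quasi-inverse in c₀(ℕ). -/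
open Filter Topology

noncomputable section

/-- `c₀(ℕ)`: complex sequences vanishing at infinity. -/
def c0 : Set (ℕ → ℂ) := {f | Filter.Tendsto f Filter.atTop (nhds (0 : ℂ))}

/-- The sup norm `‖f‖_∞`. -/
noncomputable def supNorm (f : ℕ → ℂ) : ℝ := ⨆ n, ‖f n‖

/-- The `n`-th block seminorm `2σ(n)·max{|f(2n)+r·f(2n+1)|, σ(n)·|f(2n+1)−r·f(2n)|}`. -/
noncomputable def blockNorm (r : ℝ) (σ : ℕ → ℝ) (f : ℕ → ℂ) (n : ℕ) : ℝ :=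
  2 * σ n * max ‖f (2 * n) + (r : ℂ) * f (2 * n + 1)‖
                (σ n * ‖f (2 * n + 1) - (r : ℂ) * f (2 * n)‖)

/-- The norm `‖f‖_{r,σ} = sup_n blockNorm r σ f n`. -/
noncomputable def Anorm (r : ℝ) (σ : ℕ → ℝ) (f : ℕ → ℂ) : ℝ := ⨆ n, blockNorm r σ f n

/-- The algebra `A_{r,σ}`: elements of `c₀(ℕ)` whose block norms tend to `0`. -/
def Aset (r : ℝ) (σ : ℕ → ℝ) : Set (ℕ → ℂ) :=
  {f | f ∈ c0 ∧ Filter.Tendsto (blockNorm r σ f) Filter.atTop (nhds (0 : ℝ))}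


lemma habs_sub (x y : ℂ) : ‖x - y‖ ≤ ‖x‖ + ‖y‖ := by
  simpa using norm_sub_le x y

lemma key_est (r s : ℝ) (hs : 1 ≤ s) (a b A B : ℂ)
    (ha : ‖a‖ ≤ 1/2) (hb : ‖b‖ ≤ 1/2)
    (h1 : a + A - a * A = 0) (h2 : b + B - b * B = 0) :
    2 * s * max (‖A + (r:ℂ) * B‖) (s * ‖B - (r:ℂ) * A‖) ≤
      2 * (2 * s * max (‖a + (r:ℂ) * b‖) (s * ‖b - (r:ℂ) * a‖))
      + 2 * (1 + |r|)^3 * (2 * s * max (‖a + (r:ℂ) * b‖) (s * ‖b - (r:ℂ) * a‖))^2 := by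
  set ρ := |r| with hρ
  set u := ‖a + (r:ℂ) * b‖ with hu
  set v := ‖b - (r:ℂ) * a‖ with hv
  set N := 2 * s * max u (s * v) with hN
  have hρ0 : 0 ≤ ρ := abs_nonneg r
  have hs0 : (0:ℝ) < s := lt_of_lt_of_le one_pos hs
  have hu0 : 0 ≤ u := norm_nonneg _
  have hv0 : 0 ≤ v := norm_nonneg _
  have hN0 : 0 ≤ N := mul_nonneg (by linarith) (le_trans hu0 (le_max_left _ _))
  have hrN0 : (0:ℝ) ≤ (1+ρ)*N := mul_nonneg (by linarith) hN0
  have huN : 2 * s * u ≤ N := by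
    have : u ≤ max u (s * v) := le_max_left _ _
    nlinarith
  have hvN : 2 * s * (s * v) ≤ N := by
    have : s * v ≤ max u (s * v) := le_max_right _ _
    nlinarith
  have hsv : 2 * s * v ≤ N := by nlinarith
  have habs : ∀ (x X : ℂ), ‖x‖ ≤ 1/2 → x + X - x * X = 0 →
      ‖X‖ ≤ 2 * ‖x‖ := by
    intro x X hx hxX
    have hXe : X * (1 - x) = -x := by linear_combination hxX
    have h1x : (1:ℝ)/2 ≤ ‖1 - x‖ := by
      have := norm_sub_norm_le (1:ℂ) x
      simp only [norm_one] at this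
      linarith
    have := congrArg norm hXe
    rw [norm_mul, norm_neg] at this
    nlinarith [norm_nonneg X]
  have hA : ‖A‖ ≤ 2 * ‖a‖ := habs a A ha h1
  have hB : ‖B‖ ≤ 2 * ‖b‖ := habs b B hb h2
  set xa := ‖a‖
  set xb := ‖b‖
  have hxa0 : 0 ≤ xa := norm_nonneg _
  have hxb0 : 0 ≤ xb := norm_nonneg _
  have hAn : 0 ≤ ‖A‖ := norm_nonneg _
  have hBn : 0 ≤ ‖B‖ := norm_nonneg _
  have hP : ‖A + (r:ℂ) * B‖ ≤ u + 2 * xa^2 + 2 * ρ * xb^2 := by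
    have heq : A + (r:ℂ) * B = -(a + (r:ℂ)*b) + a * A + (r:ℂ) * (b * B) := by
      linear_combination h1 + (r:ℂ) * h2
    rw [heq]
    have t1 : ‖-(a + (r:ℂ)*b) + a * A + (r:ℂ) * (b * B)‖
        ≤ ‖-(a + (r:ℂ)*b) + a * A‖ + ‖(r:ℂ) * (b * B)‖ :=
      norm_add_le _ _
    have t2 := norm_add_le (-(a + (r:ℂ)*b)) (a * A)
    rw [norm_neg, norm_mul] at t2
    rw [norm_mul, norm_mul, Complex.norm_real, Real.norm_eq_abs] at t1
    nlinarith [mul_le_mul_of_nonneg_left hA hxa0,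
      mul_le_mul_of_nonneg_left hB (mul_nonneg hρ0 hxb0)]
  have hQ : ‖B - (r:ℂ) * A‖ ≤ v + 2 * xb^2 + 2 * ρ * xa^2 := by
    have heq : B - (r:ℂ) * A = (-(b - (r:ℂ)*a) + b * B) - (r:ℂ) * (a * A) := by
      linear_combination h2 - (r:ℂ) * h1
    rw [heq]
    have t1 : ‖(-(b - (r:ℂ)*a) + b * B) - (r:ℂ) * (a * A)‖
        ≤ ‖-(b - (r:ℂ)*a) + b * B‖ + ‖(r:ℂ) * (a * A)‖ :=
      habs_sub _ _
    have t2 := norm_add_le (-(b - (r:ℂ)*a)) (b * B)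
    rw [norm_neg] at t2
    rw [norm_mul] at t2
    rw [norm_mul, norm_mul, Complex.norm_real, Real.norm_eq_abs] at t1
    nlinarith [mul_le_mul_of_nonneg_left hB hxb0,
      mul_le_mul_of_nonneg_left hA (mul_nonneg hρ0 hxa0)]
  -- s*xa and s*xb bounds
  have hxa : 2 * (s * xa) ≤ (1 + ρ) * N := by
    have heq : ((1 + r^2 : ℝ) : ℂ) * a = (a + (r:ℂ)*b) - (r:ℂ) * (b - (r:ℂ)*a) := by
      push_cast; ring
    have hc := congrArg norm heq
    rw [norm_mul, Complex.norm_real, Real.norm_eq_abs, _root_.abs_of_nonneg (by positivity : (0:ℝ) ≤ 1 + r^2)] at hc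
    have hr2 : r^2 = ρ^2 := (_root_.sq_abs r).symm
    have htr : ‖(a + (r:ℂ)*b) - (r:ℂ) * (b - (r:ℂ)*a)‖ ≤ u + ρ * v := by
      have := habs_sub (a + (r:ℂ)*b) ((r:ℂ) * (b - (r:ℂ)*a))
      rw [norm_mul, Complex.norm_real, Real.norm_eq_abs] at this
      exact this
    have key : (1 + ρ^2) * xa ≤ u + ρ * v := by rw [← hr2, hc]; exact htr
    have e1 : 2*s*((1+ρ^2)*xa) ≤ 2*s*(u + ρ*v) :=
      mul_le_mul_of_nonneg_left key (by positivity)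
    have e2 : ρ * (2*s*v) ≤ ρ * N := mul_le_mul_of_nonneg_left hsv hρ0
    have e5 : 0 ≤ 2*s*(ρ^2*xa) := by positivity
    linarith
  have hxb : 2 * (s * xb) ≤ (1 + ρ) * N := by
    have heq : ((1 + r^2 : ℝ) : ℂ) * b = (b - (r:ℂ)*a) + (r:ℂ) * (a + (r:ℂ)*b) := by
      push_cast; ring
    have hc := congrArg norm heq
    rw [norm_mul, Complex.norm_real, Real.norm_eq_abs, _root_.abs_of_nonneg (by positivity : (0:ℝ) ≤ 1 + r^2)] at hc
    have hr2 : r^2 = ρ^2 := (_root_.sq_abs r).symm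
    have htr : ‖(b - (r:ℂ)*a) + (r:ℂ) * (a + (r:ℂ)*b)‖ ≤ v + ρ * u := by
      have := norm_add_le (b - (r:ℂ)*a) ((r:ℂ) * (a + (r:ℂ)*b))
      rw [norm_mul, Complex.norm_real, Real.norm_eq_abs] at this
      exact this
    have key : (1 + ρ^2) * xb ≤ v + ρ * u := by rw [← hr2, hc]; exact htr
    have e1 : 2*s*((1+ρ^2)*xb) ≤ 2*s*(v + ρ*u) :=
      mul_le_mul_of_nonneg_left key (by positivity)
    have e2 : ρ * (2*s*u) ≤ ρ * N := mul_le_mul_of_nonneg_left huN hρ0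
    have e5 : 0 ≤ 2*s*(ρ^2*xb) := by positivity
    linarith
  -- squares
  have hsxa0 : (0:ℝ) ≤ 2*(s*xa) := by positivity
  have hsxb0 : (0:ℝ) ≤ 2*(s*xb) := by positivity
  have hxa2 : 4 * (s * xa)^2 ≤ (1+ρ)^2 * N^2 := by
    linarith [mul_le_mul hxa hxa hsxa0 hrN0]
  have hxb2 : 4 * (s * xb)^2 ≤ (1+ρ)^2 * N^2 := by
    linarith [mul_le_mul hxb hxb hsxb0 hrN0]
  have hsxa : s * xa^2 ≤ (s*xa)^2 := by
    linarith [mul_nonneg (mul_nonneg (sub_nonneg.2 hs) hs0.le) (mul_nonneg hxa0 hxa0)]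
  have hsxb : s * xb^2 ≤ (s*xb)^2 := by
    linarith [mul_nonneg (mul_nonneg (sub_nonneg.2 hs) hs0.le) (mul_nonneg hxb0 hxb0)]
  have hid : (1+ρ)^3 * N^2 = (1+ρ)^2 * N^2 + ρ * ((1+ρ)^2 * N^2) := by ring
  have hN2 : 0 ≤ (1+ρ)^2 * N^2 := by positivity
  rw [show (2 * s * max (‖A + (r:ℂ) * B‖) (s * ‖B - (r:ℂ) * A‖))
      = max (2 * s * ‖A + (r:ℂ) * B‖) (2 * s * (s * ‖B - (r:ℂ) * A‖)) from
      mul_max_of_nonneg _ _ (by linarith)]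
  apply max_le
  · have t1 : 2*s*‖A + (r:ℂ) * B‖ ≤ 2*s*u + 4*(s*xa^2) + 4*ρ*(s*xb^2) := by
      have := mul_le_mul_of_nonneg_left hP (by linarith : (0:ℝ) ≤ 2*s)
      linarith
    have t2 : 4*ρ*(s*xb^2) ≤ ρ * ((1+ρ)^2*N^2) := by
      linarith [mul_le_mul_of_nonneg_left hsxb hρ0, mul_le_mul_of_nonneg_left hxb2 hρ0]
    have t3 : 4*(s*xa^2) ≤ (1+ρ)^2*N^2 := by linarith
    linarith [mul_nonneg hρ0 hN2]
  · have t1 : 2*s*(s*‖B - (r:ℂ) * A‖) ≤ 2*s*(s*v) + 4*(s*xb)^2 + 4*ρ*(s*xa)^2 := by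
      have := mul_le_mul_of_nonneg_left hQ (by positivity : (0:ℝ) ≤ 2*s*s)
      linarith
    have t2 : 4*ρ*(s*xa)^2 ≤ ρ * ((1+ρ)^2*N^2) := by
      linarith [mul_le_mul_of_nonneg_left hxa2 hρ0]
    linarith [mul_nonneg hρ0 hN2]

/-- `A_{r,σ}` is spectral invariant in `c₀(ℕ)`. -/
theorem Aset_spectral_invariant (r : ℝ) (σ : ℕ → ℝ) (hσ : ∀ n, 1 ≤ σ n)
    (f : ℕ → ℂ) (hf : f ∈ Aset r σ) :
    (∃ g ∈ Aset r σ, f + g - f * g = 0 ∧ g + f - g * f = 0) ↔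
    (∃ g ∈ c0, f + g - f * g = 0 ∧ g + f - g * f = 0) := by
  constructor
  · rintro ⟨g, hg, h1, h2⟩
    exact ⟨g, hg.1, h1, h2⟩
  · rintro ⟨g, hg, h1, h2⟩
    refine ⟨g, ⟨hg, ?_⟩, h1, h2⟩
    have he : ∀ m, f m + g m - f m * g m = 0 := by
      intro m
      have := congrFun h1 m
      simpa using this
    set N := blockNorm r σ f with hNdef
    have hN : Filter.Tendsto N Filter.atTop (nhds 0) := hf.2
    have hM : Filter.Tendsto (fun n => 2 * N n + 2 * (1 + |r|)^3 * (N n)^2)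
        Filter.atTop (nhds 0) := by
      have := (hN.const_mul 2).add ((hN.mul hN).const_mul (2 * (1 + |r|)^3))
      simpa [sq, mul_comm, mul_assoc, mul_left_comm] using this
    -- eventually |f m| ≤ 1/2
    obtain ⟨N0, hN0⟩ := Metric.tendsto_atTop.mp hf.1 (1/2) (by norm_num)
    have hsmall : ∀ m ≥ N0, ‖f m‖ ≤ 1/2 := by
      intro m hm
      have := hN0 m hm
      rw [Complex.dist_eq, sub_zero] at this
      exact this.le
    apply squeeze_zero' (Filter.Eventually.of_forall ?_) ?_ hM
    · intro n
      have h1σ := hσ n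
      have : (0:ℝ) ≤ σ n := by linarith
      unfold blockNorm
      have := norm_nonneg (g (2*n) + (r:ℂ) * g (2*n+1))
      positivity
    · filter_upwards [Filter.eventually_ge_atTop N0] with n hn
      have ha : ‖f (2*n)‖ ≤ 1/2 := hsmall _ (by omega)
      have hb : ‖f (2*n+1)‖ ≤ 1/2 := hsmall _ (by omega)
      have := key_est r (σ n) (hσ n) (f (2*n)) (f (2*n+1)) (g (2*n)) (g (2*n+1))
        ha hb (he (2*n)) (he (2*n+1))
      simpa [blockNorm, hNdef] using this
end
end

section
/- Let r ∈ ℝ, σ : ℕ → [1, ∞), and suppose K > 0 satisfies ‖fg‖_{r,σ} ≤ K(‖f‖_{r,σ}·‖g‖_∞ + ‖f‖_∞·‖g‖_{r,σ}) for all f, g ∈ A_{r,σ}. Then for every n ∈ ℕ, K ≥ σ(n)·|r² − r| / (2(1 + r²)·max{1, |r|}). -/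
open Filter Topology

noncomputable section

/-- Any `D₁`-constant `K` for `A_{r,σ}` in `c₀(ℕ)` satisfies
`K ≥ σ(n)·|r² − r| / (2(1 + r²)·max{1, |r|})` for every `n`. -/
theorem D1_constant_lower_bound (r : ℝ) (σ : ℕ → ℝ) (hσ : ∀ n, 1 ≤ σ n)
    (K : ℝ) (hK : 0 < K)
    (hD1 : ∀ f ∈ Aset r σ, ∀ g ∈ Aset r σ,
      Anorm r σ (f * g) ≤ K * (Anorm r σ f * supNorm g + supNorm f * Anorm r σ g)) :
    ∀ n : ℕ, σ n * |r ^ 2 - r| / (2 * (1 + r ^ 2) * max 1 |r|) ≤ K := by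
  intro n
  classical
  set s := σ n with hsdef
  have hs : 1 ≤ s := hσ n
  set f : ℕ → ℂ := fun m => if m = 2*n then 1 else if m = 2*n+1 then (r:ℂ) else 0 with hf
  have hf1 : f (2*n) = 1 := by simp [hf]
  have hf2 : f (2*n+1) = (r:ℂ) := by simp [hf]
  have hf0 : ∀ m, m ≠ 2*n → m ≠ 2*n+1 → f m = 0 := by
    intro m h1 h2; simp [hf, h1, h2]
  -- block norms of f
  have hbfn : blockNorm r σ f n = 2*s*(1+r^2) := by
    unfold blockNorm
    rw [hf1, hf2]
    have h1 : (1 + (r:ℂ)*r) = ((1 + r^2 : ℝ) : ℂ) := by push_cast; ring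
    have h2 : ((r:ℂ) - r*1) = 0 := by ring
    rw [h1, h2, Complex.norm_real, Real.norm_eq_abs]
    rw [abs_of_nonneg (by positivity)]
    rw [norm_zero, mul_zero]
    rw [max_eq_left (by positivity)]
  have hbf0 : ∀ m, m ≠ n → blockNorm r σ f m = 0 := by
    intro m hm
    unfold blockNorm
    rw [hf0 (2*m) (by omega) (by omega), hf0 (2*m+1) (by omega) (by omega)]
    simp
  have hAf : Anorm r σ f ≤ 2*s*(1+r^2) := by
    apply ciSup_le
    intro m
    by_cases hm : m = n
    · subst hm; rw [hbfn]
    · rw [hbf0 m hm]; nlinarith [sq_nonneg r]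
  have hAf0 : (0:ℝ) ≤ Anorm r σ f := by
    apply Real.iSup_nonneg
    intro m
    by_cases hm : m = n
    · subst hm; rw [hbfn]; nlinarith [sq_nonneg r]
    · rw [hbf0 m hm]
  -- sup norm of f
  set M := max 1 |r| with hM
  have hM1 : (1:ℝ) ≤ M := le_max_left _ _
  have hSf : supNorm f ≤ M := by
    apply ciSup_le
    intro m
    by_cases h1 : m = 2*n
    · subst h1; rw [hf1, norm_one]; exact hM1
    · by_cases h2 : m = 2*n+1
      · subst h2; rw [hf2, Complex.norm_real, Real.norm_eq_abs]; exact le_max_right _ _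
      · rw [hf0 m h1 h2]; simp; linarith
  have hSf0 : (0:ℝ) ≤ supNorm f := Real.iSup_nonneg fun m => norm_nonneg _
  -- f ∈ Aset
  have hmem : f ∈ Aset r σ := by
    constructor
    · have he : (fun _ : ℕ => (0:ℂ)) =ᶠ[atTop] f :=
        eventually_atTop.2 ⟨2*n+2, fun m hm => (hf0 m (by omega) (by omega)).symm⟩
      exact tendsto_const_nhds.congr' he
    · have he : (fun _ : ℕ => (0:ℝ)) =ᶠ[atTop] blockNorm r σ f :=
        eventually_atTop.2 ⟨n+1, fun m hm => (hbf0 m (by omega)).symm⟩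
      exact tendsto_const_nhds.congr' he
  -- block norm of f*f at n
  have e1 : (f*f) (2*n) = 1 := by simp [Pi.mul_apply, hf1]
  have e2 : (f*f) (2*n+1) = (r:ℂ)*r := by simp [Pi.mul_apply, hf2]
  have hff0 : ∀ m, m ≠ 2*n → m ≠ 2*n+1 → (f*f) m = 0 := by
    intro m h1 h2; simp [Pi.mul_apply, hf0 m h1 h2]
  have habs : ‖(r:ℂ)*r - (r:ℂ)*1‖ = |r^2 - r| := by
    have : ((r:ℂ)*r - (r:ℂ)*1) = ((r^2 - r : ℝ) : ℂ) := by push_cast; ring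
    rw [this, Complex.norm_real, Real.norm_eq_abs]
  have hffn : 2*s*(s*|r^2 - r|) ≤ blockNorm r σ (f*f) n := by
    unfold blockNorm
    rw [e1, e2, habs]
    have h1 := le_max_right ‖1 + (r:ℂ)*((r:ℂ)*r)‖ (s * |r^2 - r|)
    nlinarith [abs_nonneg (r^2 - r), norm_nonneg (1 + (r:ℂ)*((r:ℂ)*r))]
  have hffm : ∀ m, m ≠ n → blockNorm r σ (f*f) m = 0 := by
    intro m hm
    unfold blockNorm
    rw [hff0 (2*m) (by omega) (by omega), hff0 (2*m+1) (by omega) (by omega)]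
    simp
  have hbdd : BddAbove (Set.range (blockNorm r σ (f*f))) := by
    refine ⟨blockNorm r σ (f*f) n, ?_⟩
    rintro x ⟨m, rfl⟩
    by_cases hm : m = n
    · subst hm; exact le_refl _
    · rw [hffm m hm]
      calc (0:ℝ) ≤ 2*s*(s*|r^2 - r|) :=
            mul_nonneg (by linarith) (mul_nonneg (by linarith) (abs_nonneg _))
        _ ≤ _ := hffn
  have hAff : blockNorm r σ (f*f) n ≤ Anorm r σ (f*f) := le_ciSup hbdd n
  -- apply hD1
  have hmain := hD1 f hmem f hmem
  have hchain : 2*s*(s*|r^2 - r|) ≤ K * (2*s*(1+r^2)*M + M*(2*s*(1+r^2))) := by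
    calc 2*s*(s*|r^2 - r|) ≤ blockNorm r σ (f*f) n := hffn
      _ ≤ Anorm r σ (f*f) := hAff
      _ ≤ K * (Anorm r σ f * supNorm f + supNorm f * Anorm r σ f) := hmain
      _ ≤ K * (2*s*(1+r^2)*M + M*(2*s*(1+r^2))) := by
          apply mul_le_mul_of_nonneg_left _ hK.le
          have hb : (0:ℝ) ≤ 2*s*(1+r^2) := by nlinarith [sq_nonneg r]
          nlinarith [mul_le_mul hAf hSf hSf0 hb, mul_le_mul hSf hAf hAf0 (by linarith : (0:ℝ) ≤ M)]
  -- conclude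
  rw [div_le_iff₀ (mul_pos (by positivity : (0:ℝ) < 2*(1+r^2)) (by linarith : (0:ℝ) < M))]
  nlinarith [abs_nonneg (r^2 - r), sq_nonneg r, hK.le, mul_pos (mul_pos (by positivity : (0:ℝ) < 2*(1+r^2)) (by linarith : (0:ℝ) < M)) hK]
end
end

section
/- For every σ : ℕ → [1, ∞), the algebra A_{0,σ} (the case r = 0) satisfies the D₁-condition in c₀(ℕ): there exists K > 0 such that ‖fg‖_{0,σ} ≤ K(‖f‖_{0,σ}·‖g‖_∞ + ‖f‖_∞·‖g‖_{0,σ}) for all f, g ∈ A_{0,σ}. -/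
open Filter Topology

noncomputable section

lemma blockNorm_nonneg (σ : ℕ → ℝ) (hσ : ∀ n, 1 ≤ σ n) (f : ℕ → ℂ) (n : ℕ) :
    0 ≤ blockNorm 0 σ f n := by
  have h1 : (0:ℝ) ≤ 2 * σ n := by nlinarith [hσ n]
  exact mul_nonneg h1 (le_max_of_le_left (norm_nonneg _))

lemma abs_bdd (f : ℕ → ℂ) (hf : f ∈ c0) :
    BddAbove (Set.range fun n => ‖f n‖) := by
  have := (Filter.Tendsto.norm hf).bddAbove_range
  simpa using this

lemma le_supNorm (f : ℕ → ℂ) (hf : f ∈ c0) (n : ℕ) : ‖f n‖ ≤ supNorm f :=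
  le_ciSup (abs_bdd f hf) n

/-- For `r = 0`, `A_{0,σ}` satisfies the `D₁`-condition in `c₀(ℕ)`. -/
theorem Aset_zero_D1 (σ : ℕ → ℝ) (hσ : ∀ n, 1 ≤ σ n) :
    ∃ K : ℝ, 0 < K ∧ ∀ f ∈ Aset 0 σ, ∀ g ∈ Aset 0 σ,
      Anorm 0 σ (f * g) ≤ K * (Anorm 0 σ f * supNorm g + supNorm f * Anorm 0 σ g) := by
  refine ⟨1, one_pos, ?_⟩
  rintro f ⟨hf0, hfb⟩ g ⟨hg0, hgb⟩
  have hSg : 0 ≤ supNorm g := le_trans (norm_nonneg (g 0)) (le_supNorm g hg0 0)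
  have hSf : 0 ≤ supNorm f := le_trans (norm_nonneg (f 0)) (le_supNorm f hf0 0)
  have hbddf : BddAbove (Set.range (blockNorm 0 σ f)) := hfb.bddAbove_range
  have hbddg : BddAbove (Set.range (blockNorm 0 σ g)) := hgb.bddAbove_range
  have hAg : 0 ≤ Anorm 0 σ g :=
    le_trans (blockNorm_nonneg σ hσ g 0) (le_ciSup hbddg 0)
  have key : ∀ n, blockNorm 0 σ (f * g) n ≤ Anorm 0 σ f * supNorm g := by
    intro n
    have hσn : (0:ℝ) ≤ σ n := le_trans zero_le_one (hσ n)
    have h2σ : (0:ℝ) ≤ 2 * σ n := by linarith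
    have h1 : ‖(f * g) (2 * n)‖ ≤ ‖f (2 * n)‖ * supNorm g := by
      rw [Pi.mul_apply, norm_mul]
      exact mul_le_mul_of_nonneg_left (le_supNorm g hg0 _) (norm_nonneg _)
    have h2 : ‖(f * g) (2 * n + 1)‖ ≤ ‖f (2 * n + 1)‖ * supNorm g := by
      rw [Pi.mul_apply, norm_mul]
      exact mul_le_mul_of_nonneg_left (le_supNorm g hg0 _) (norm_nonneg _)
    have hmax : max (‖(f * g) (2 * n)‖)
        (σ n * ‖(f * g) (2 * n + 1)‖) ≤
        max (‖f (2 * n)‖) (σ n * ‖f (2 * n + 1)‖) * supNorm g := by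
      refine max_le ?_ ?_
      · exact h1.trans (mul_le_mul_of_nonneg_right (le_max_left _ _) hSg)
      · calc σ n * ‖(f * g) (2 * n + 1)‖
            ≤ σ n * (‖f (2 * n + 1)‖ * supNorm g) :=
              mul_le_mul_of_nonneg_left h2 hσn
          _ = σ n * ‖f (2 * n + 1)‖ * supNorm g := by ring
          _ ≤ _ := mul_le_mul_of_nonneg_right (le_max_right _ _) hSg
    have hstep : blockNorm 0 σ (f * g) n ≤ blockNorm 0 σ f n * supNorm g := by
      simp only [blockNorm, Complex.ofReal_zero, zero_mul, add_zero, sub_zero]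
      calc 2 * σ n * max (‖(f * g) (2 * n)‖)
              (σ n * ‖(f * g) (2 * n + 1)‖)
          ≤ 2 * σ n * (max (‖f (2 * n)‖)
              (σ n * ‖f (2 * n + 1)‖) * supNorm g) :=
            mul_le_mul_of_nonneg_left hmax h2σ
        _ = 2 * σ n * max (‖f (2 * n)‖)
              (σ n * ‖f (2 * n + 1)‖) * supNorm g := by ring
    refine hstep.trans (mul_le_mul_of_nonneg_right ?_ hSg)
    exact le_ciSup hbddf n
  have : Anorm 0 σ (f * g) ≤ Anorm 0 σ f * supNorm g := ciSup_le key
  have hpos : 0 ≤ supNorm f * Anorm 0 σ g := mul_nonneg hSf hAg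
  linarith
end
end

section
/- For every σ : ℕ → [1, ∞), the algebra A_{1,σ} (the case r = 1) satisfies the D₁-condition in c₀(ℕ): there exists K > 0 such that ‖fg‖_{1,σ} ≤ K(‖f‖_{1,σ}·‖g‖_∞ + ‖f‖_∞·‖g‖_{1,σ}) for all f, g ∈ A_{1,σ}. -/
open Filter Topology

noncomputable section

/-- For `r = 1`, `A_{1,σ}` satisfies the `D₁`-condition in `c₀(ℕ)`. -/
theorem Aset_one_D1 (σ : ℕ → ℝ) (hσ : ∀ n, 1 ≤ σ n) :
    ∃ K : ℝ, 0 < K ∧ ∀ f ∈ Aset 1 σ, ∀ g ∈ Aset 1 σ,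
      Anorm 1 σ (f * g) ≤ K * (Anorm 1 σ f * supNorm g + supNorm f * Anorm 1 σ g) := by
  refine ⟨2, by norm_num, ?_⟩
  intro f hf g hg
  obtain ⟨hf0, hfb⟩ := hf
  obtain ⟨hg0, hgb⟩ := hg
  -- bounds from sup norms
  have hfB : BddAbove (Set.range fun k => ‖f k‖) := by
    simpa using (hf0.norm).bddAbove_range
  have hgB : BddAbove (Set.range fun k => ‖g k‖) := by
    simpa using (hg0.norm).bddAbove_range
  have hMf : ∀ k, ‖f k‖ ≤ supNorm f := fun k => le_ciSup hfB k
  have hMg : ∀ k, ‖g k‖ ≤ supNorm g := fun k => le_ciSup hgB k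
  have hMf0 : 0 ≤ supNorm f := le_trans (norm_nonneg _) (hMf 0)
  have hMg0 : 0 ≤ supNorm g := le_trans (norm_nonneg _) (hMg 0)
  have hbnf : ∀ h : ℕ → ℂ, ∀ n, 0 ≤ blockNorm 1 σ h n := by
    intro h n
    have h1 := hσ n
    exact mul_nonneg (by linarith)
      (le_trans (norm_nonneg _) (le_max_left _ _))
  have hNfk : ∀ n, blockNorm 1 σ f n ≤ Anorm 1 σ f :=
    fun n => le_ciSup hfb.bddAbove_range n
  have hNgk : ∀ n, blockNorm 1 σ g n ≤ Anorm 1 σ g :=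
    fun n => le_ciSup hgb.bddAbove_range n
  have hNf0 : 0 ≤ Anorm 1 σ f := le_trans (hbnf f 0) (hNfk 0)
  have hNg0 : 0 ≤ Anorm 1 σ g := le_trans (hbnf g 0) (hNgk 0)
  refine ciSup_le fun n => ?_
  have hσn := hσ n
  have hsnn : (0:ℝ) ≤ σ n := by linarith
  -- block bounds for f and g
  have A1 : 2 * σ n * ‖f (2*n) + f (2*n+1)‖ ≤ Anorm 1 σ f := by
    have h := hNfk n
    simp only [blockNorm, Complex.ofReal_one, one_mul] at h
    exact le_trans (mul_le_mul_of_nonneg_left (le_max_left _ _) (by linarith)) h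
  have A2 : 2 * σ n * (σ n * ‖f (2*n+1) - f (2*n)‖) ≤ Anorm 1 σ f := by
    have h := hNfk n
    simp only [blockNorm, Complex.ofReal_one, one_mul] at h
    exact le_trans (mul_le_mul_of_nonneg_left (le_max_right _ _) (by linarith)) h
  have B2 : 2 * σ n * (σ n * ‖g (2*n+1) - g (2*n)‖) ≤ Anorm 1 σ g := by
    have h := hNgk n
    simp only [blockNorm, Complex.ofReal_one, one_mul] at h
    exact le_trans (mul_le_mul_of_nonneg_left (le_max_right _ _) (by linarith)) h
  -- sup-norm bounds
  have hsf : ‖f (2*n) + f (2*n+1)‖ ≤ 2 * supNorm f :=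
    le_trans (norm_add_le _ _) (by linarith [hMf (2*n), hMf (2*n+1)])
  have hsg : ‖g (2*n) + g (2*n+1)‖ ≤ 2 * supNorm g :=
    le_trans (norm_add_le _ _) (by linarith [hMg (2*n), hMg (2*n+1)])
  have hdg : ‖g (2*n+1) - g (2*n)‖ ≤ 2 * supNorm g := by
    have := norm_sub_le_norm_sub_add_norm_sub (g (2*n+1)) 0 (g (2*n))
    simp at this
    linarith [hMg (2*n), hMg (2*n+1)]
  -- triangle estimates for the product
  have T1 : ‖f (2*n) * g (2*n) + f (2*n+1) * g (2*n+1)‖ ≤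
      (‖f (2*n) + f (2*n+1)‖ * ‖g (2*n) + g (2*n+1)‖ +
       ‖f (2*n+1) - f (2*n)‖ * ‖g (2*n+1) - g (2*n)‖) / 2 := by
    have hid : f (2*n) * g (2*n) + f (2*n+1) * g (2*n+1) =
        ((f (2*n) + f (2*n+1)) * (g (2*n) + g (2*n+1)) +
         (f (2*n+1) - f (2*n)) * (g (2*n+1) - g (2*n))) / 2 := by ring
    rw [hid, norm_div, Complex.norm_two]
    have h := norm_add_le ((f (2*n) + f (2*n+1)) * (g (2*n) + g (2*n+1)))
      ((f (2*n+1) - f (2*n)) * (g (2*n+1) - g (2*n)))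
    rw [norm_mul, norm_mul] at h
    linarith
  have T2 : ‖f (2*n+1) * g (2*n+1) - f (2*n) * g (2*n)‖ ≤
      (‖f (2*n) + f (2*n+1)‖ * ‖g (2*n+1) - g (2*n)‖ +
       ‖f (2*n+1) - f (2*n)‖ * ‖g (2*n) + g (2*n+1)‖) / 2 := by
    have hid : f (2*n+1) * g (2*n+1) - f (2*n) * g (2*n) =
        ((f (2*n) + f (2*n+1)) * (g (2*n+1) - g (2*n)) +
         (f (2*n+1) - f (2*n)) * (g (2*n) + g (2*n+1))) / 2 := by ring
    rw [hid, norm_div, Complex.norm_two]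
    have h := norm_add_le ((f (2*n) + f (2*n+1)) * (g (2*n+1) - g (2*n)))
      ((f (2*n+1) - f (2*n)) * (g (2*n) + g (2*n+1)))
    rw [norm_mul, norm_mul] at h
    linarith
  -- final estimate for the n-th block of f*g
  simp only [blockNorm, Pi.mul_apply, Complex.ofReal_one, one_mul]
  rw [mul_max_of_nonneg _ _ (by linarith : (0:ℝ) ≤ 2 * σ n)]
  apply max_le
  · have h1 : (2 * σ n * ‖f (2*n) + f (2*n+1)‖) *
        ‖g (2*n) + g (2*n+1)‖ ≤ Anorm 1 σ f * (2 * supNorm g) :=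
      mul_le_mul A1 hsg (norm_nonneg _) hNf0
    have h2 : (2 * σ n * (σ n * ‖f (2*n+1) - f (2*n)‖)) *
        ‖g (2*n+1) - g (2*n)‖ ≤ Anorm 1 σ f * (2 * supNorm g) :=
      mul_le_mul A2 hdg (norm_nonneg _) hNf0
    have hT := mul_le_mul_of_nonneg_left T1 hsnn
    have hdd : (σ n - 1) * (σ n * (‖f (2*n+1) - f (2*n)‖ *
        ‖g (2*n+1) - g (2*n)‖)) ≥ 0 :=
      mul_nonneg (by linarith) (mul_nonneg hsnn
        (mul_nonneg (norm_nonneg _) (norm_nonneg _)))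
    nlinarith [mul_nonneg hMf0 hNg0]
  · have h1 : (2 * σ n * (σ n * ‖g (2*n+1) - g (2*n)‖)) *
        ‖f (2*n) + f (2*n+1)‖ ≤ Anorm 1 σ g * (2 * supNorm f) :=
      mul_le_mul B2 hsf (norm_nonneg _) hNg0
    have h2 : (2 * σ n * (σ n * ‖f (2*n+1) - f (2*n)‖)) *
        ‖g (2*n) + g (2*n+1)‖ ≤ Anorm 1 σ f * (2 * supNorm g) :=
      mul_le_mul A2 hsg (norm_nonneg _) hNf0
    have hT := mul_le_mul_of_nonneg_left T2 (mul_nonneg hsnn hsnn)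
    nlinarith []
end
end
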